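/- arXiv:2201.09191 — 2 statements merged into one kernel-verified Lean document; each statement's English description precedes it below -/
import Mathlib

section
/- Suppose q_0 : ℝ^{D×N} → Δ^{N-1} is permutation-equivariant, i.e., q_0(X_π) = π applied to q_0(X) for every column permutation π. If P*(X) is the unique minimizer of the strictly convex UOT objective ⟨−X,P⟩ + α_0 R(P) + α_1 KL(P1_N | p_0) + α_2 KL(Pᵀ1_D | q_0(X)) over matrices P with positive entries, where R is either the entropic regularizer ⟨P, log P − 1⟩ or the quadratic regularizer ⟨P,P⟩, then P*(X_π) = (P*(X))_π, i.e., P* is permutation-equivariant in the columns. -/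
/-- Entropic regularizer `⟨P, log P − 1⟩`. -/
noncomputable def entReg {D N : ℕ} (P : Matrix (Fin D) (Fin N) ℝ) : ℝ :=
  ∑ d, ∑ n, P d n * (Real.log (P d n) - 1)

/-- Quadratic regularizer `⟨P, P⟩`. -/
def quadReg {D N : ℕ} (P : Matrix (Fin D) (Fin N) ℝ) : ℝ :=
  ∑ d, ∑ n, P d n * P d n

/-- KL divergence between positive vectors. -/
noncomputable def KLvec {k : ℕ} (a b : Fin k → ℝ) : ℝ :=
  ∑ i, (a i * (Real.log (a i) - Real.log (b i)) - (a i - b i))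

lemma KLvec_comp {k : ℕ} (a b : Fin k → ℝ) (π : Equiv.Perm (Fin k)) :
    KLvec (a ∘ ⇑π) (b ∘ ⇑π) = KLvec a b := by
  unfold KLvec
  exact Equiv.sum_comp π (fun i => a i * (Real.log (a i) - Real.log (b i)) - (a i - b i))

lemma entReg_perm {D N : ℕ} (P : Matrix (Fin D) (Fin N) ℝ) (π : Equiv.Perm (Fin N)) :
    entReg (P.submatrix id ⇑π) = entReg P := by
  unfold entReg
  exact Finset.sum_congr rfl fun d _ =>
    Equiv.sum_comp π (fun n => P d n * (Real.log (P d n) - 1))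

lemma quadReg_perm {D N : ℕ} (P : Matrix (Fin D) (Fin N) ℝ) (π : Equiv.Perm (Fin N)) :
    quadReg (P.submatrix id ⇑π) = quadReg P := by
  unfold quadReg
  exact Finset.sum_congr rfl fun d _ => Equiv.sum_comp π (fun n => P d n * P d n)

/-- If `q₀` is permutation-equivariant and `P*` is the unique minimizer of the UOT
objective over positive matrices, then `P*` is permutation-equivariant in columns. -/
theorem stmt_2 (D N : ℕ) (α0 α1 α2 : ℝ) (h0 : 0 < α0) (h1 : 0 < α1) (h2 : 0 < α2)
    (p0 : Fin D → ℝ) (hp0 : ∀ d, 0 < p0 d) (hp0s : ∑ d, p0 d = 1)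
    (R : Matrix (Fin D) (Fin N) ℝ → ℝ) (hR : R = entReg ∨ R = quadReg)
    (q0 : Matrix (Fin D) (Fin N) ℝ → (Fin N → ℝ))
    (hq0pos : ∀ X n, 0 < q0 X n) (hq0sum : ∀ X, ∑ n, q0 X n = 1)
    (hq0equiv : ∀ (X : Matrix (Fin D) (Fin N) ℝ) (π : Equiv.Perm (Fin N)),
      q0 (X.submatrix id ⇑π) = (q0 X) ∘ ⇑π)
    (J : Matrix (Fin D) (Fin N) ℝ → Matrix (Fin D) (Fin N) ℝ → ℝ)
    (hJ : ∀ X P, J X P = (∑ d, ∑ n, (-(X d n)) * P d n) + α0 * R P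
        + α1 * KLvec (fun d => ∑ n, P d n) p0
        + α2 * KLvec (fun n => ∑ d, P d n) (q0 X))
    (Pstar : Matrix (Fin D) (Fin N) ℝ → Matrix (Fin D) (Fin N) ℝ)
    (hpos : ∀ X d n, 0 < Pstar X d n)
    (hmin : ∀ X P, (∀ d n, 0 < P d n) → P ≠ Pstar X → J X (Pstar X) < J X P)
    (X : Matrix (Fin D) (Fin N) ℝ) (π : Equiv.Perm (Fin N)) :
    Pstar (X.submatrix id ⇑π) = (Pstar X).submatrix id ⇑π := by
  -- key invariance: J (Xπ) (Pπ) = J X P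
  have hRperm : ∀ P : Matrix (Fin D) (Fin N) ℝ, R (P.submatrix id ⇑π) = R P := by
    rcases hR with h | h <;> subst h
    · exact fun P => entReg_perm P π
    · exact fun P => quadReg_perm P π
  have hinv : ∀ P : Matrix (Fin D) (Fin N) ℝ,
      J (X.submatrix id ⇑π) (P.submatrix id ⇑π) = J X P := by
    intro P
    rw [hJ, hJ, hRperm, hq0equiv]
    have h1' : (∑ d, ∑ n, (-(X.submatrix id ⇑π) d n) * (P.submatrix id ⇑π) d n)
        = ∑ d, ∑ n, (-(X d n)) * P d n :=
      Finset.sum_congr rfl fun d _ => Equiv.sum_comp π (fun n => (-(X d n)) * P d n)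
    have h2' : (fun d => ∑ n, (P.submatrix id ⇑π) d n) = fun d => ∑ n, P d n := by
      funext d; exact Equiv.sum_comp π (fun n => P d n)
    have h3' : KLvec (fun n => ∑ d, (P.submatrix id ⇑π) d n) ((q0 X) ∘ ⇑π)
        = KLvec (fun n => ∑ d, P d n) (q0 X) := by
      have : (fun n => ∑ d, (P.submatrix id ⇑π) d n) = (fun n => ∑ d, P d n) ∘ ⇑π := rfl
      rw [this, KLvec_comp]
    rw [h1', h2', h3']
  set Xp := X.submatrix id ⇑π with hXp
  by_contra hne
  have hle1 : J Xp (Pstar Xp) < J Xp ((Pstar X).submatrix id ⇑π) :=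
    hmin Xp _ (fun d n => hpos X d (π n)) (Ne.symm hne)
  have hback : ((Pstar Xp).submatrix id ⇑π.symm).submatrix id ⇑π = Pstar Xp := by
    ext d n; simp [Matrix.submatrix]
  have hne2 : (Pstar Xp).submatrix id ⇑π.symm ≠ Pstar X := by
    intro h
    apply hne
    rw [← h, hback]
  have hle2 : J X (Pstar X) < J X ((Pstar Xp).submatrix id ⇑π.symm) :=
    hmin X _ (fun d n => hpos Xp d (π.symm n)) hne2
  have e1 : J Xp ((Pstar X).submatrix id ⇑π) = J X (Pstar X) := hinv _
  have e2 : J Xp (Pstar Xp) = J X ((Pstar Xp).submatrix id ⇑π.symm) := by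
    rw [← hinv ((Pstar Xp).submatrix id ⇑π.symm), hback]
  linarith
end

section
/- For marginals p = (1/D)1_D and a strictly positive q = a ∈ Δ^{N-1}, the unique minimizer of the entropic regularizer R(P)=⟨P, log P − 1⟩ over Π(p, a) is the rank-one matrix P* = (1/D)1_D aᵀ, and the resulting pooling f(X) = (X ⊙ (diag(P*1_N)^{-1} P*))1_N equals attention-pooling: f(X) = X a. -/
/-- Pointwise Gibbs inequality with equality case. -/
lemma gibbs_aux (p q : ℝ) (hp : 0 ≤ p) (hq : 0 < q) :
    0 ≤ p * Real.log p - p * Real.log q - p + q ∧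
    (p * Real.log p - p * Real.log q - p + q = 0 → p = q) := by
  rcases hp.eq_or_lt with h | hp'
  · subst h
    simp only [zero_mul, sub_zero, zero_sub, neg_add_eq_sub, sub_zero, zero_add]
    constructor
    · linarith
    · intro h; linarith
  · constructor
    · have h := Real.log_le_sub_one_of_pos (div_pos hq hp')
      rw [Real.log_div hq.ne' hp'.ne'] at h
      have := mul_le_mul_of_nonneg_left h hp'.le
      have hqp : p * (q / p - 1) = q - p := by field_simp
      rw [hqp] at this
      nlinarith
    · intro heq
      by_contra hne
      have hratio : q / p ≠ 1 := by
        intro h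
        exact hne ((div_eq_one_iff_eq hp'.ne').mp h).symm
      have h := Real.log_lt_sub_one_of_pos (div_pos hq hp') hratio
      rw [Real.log_div hq.ne' hp'.ne'] at h
      have := mul_lt_mul_of_pos_left h hp'
      have hqp : p * (q / p - 1) = q - p := by field_simp
      rw [hqp] at this
      nlinarith

/-- For marginals `p = (1/D)·1` and a strictly positive `a ∈ Δ^{N-1}`, the entropic
regularizer is uniquely minimized over `Π(p,a)` by `(1/D)·1 aᵀ`, and the resulting
pooling equals attention-pooling `X a`. -/
theorem stmt_8 (D N : ℕ) (hD : 0 < D)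
    (a : Fin N → ℝ) (ha : ∀ n, 0 < a n) (has : ∑ n, a n = 1)
    (X : Matrix (Fin D) (Fin N) ℝ)
    (Pstar : Matrix (Fin D) (Fin N) ℝ)
    (hPstar : Pstar = fun d n => (1 / (D : ℝ)) * a n) :
    (∀ P : Matrix (Fin D) (Fin N) ℝ, (∀ d n, 0 ≤ P d n) →
      (∀ d, ∑ n, P d n = 1 / (D : ℝ)) → (∀ n, ∑ d, P d n = a n) →
      ((∑ d, ∑ n, Pstar d n * (Real.log (Pstar d n) - 1))
          ≤ ∑ d, ∑ n, P d n * (Real.log (P d n) - 1)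
        ∧ ((∑ d, ∑ n, Pstar d n * (Real.log (Pstar d n) - 1))
            = (∑ d, ∑ n, P d n * (Real.log (P d n) - 1)) → P = Pstar)))
    ∧ (∀ d, ∑ n, X d n * (Pstar d n / ∑ m, Pstar d m) = ∑ n, X d n * a n) := by
  have hD' : ((D : ℝ)) ≠ 0 := Nat.cast_ne_zero.mpr hD.ne'
  have hDpos : (0 : ℝ) < (D : ℝ) := Nat.cast_pos.mpr hD
  have hQpos : ∀ n, 0 < (1 / (D : ℝ)) * a n := fun n =>
    mul_pos (by positivity) (ha n)
  subst hPstar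
  constructor
  · intro P hP0 hProw hPcol
    -- cross-term lemma
    have cross : ∀ Q : Matrix (Fin D) (Fin N) ℝ, (∀ n, ∑ d, Q d n = a n) →
        ∑ d, ∑ n, Q d n * Real.log ((1 / (D : ℝ)) * a n)
          = ∑ n, a n * Real.log ((1 / (D : ℝ)) * a n) := by
      intro Q hQ
      rw [Finset.sum_comm]
      refine Finset.sum_congr rfl fun n _ => ?_
      rw [← Finset.sum_mul, hQ]
    have tot : ∀ Q : Matrix (Fin D) (Fin N) ℝ, (∀ n, ∑ d, Q d n = a n) →
        ∑ d, ∑ n, Q d n = 1 := by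
      intro Q hQ
      have hc : ∑ d, ∑ n, Q d n = ∑ n, ∑ d, Q d n := Finset.sum_comm
      rw [hc]
      simp_rw [hQ]
      exact has
    have hPstarcol : ∀ n, ∑ d : Fin D, (1 / (D : ℝ)) * a n = a n := by
      intro n
      rw [Finset.sum_const, Finset.card_fin, nsmul_eq_mul]
      field_simp
    -- the key identity
    have key :
        (∑ d, ∑ n, P d n * (Real.log (P d n) - 1))
          - (∑ _d : Fin D, ∑ n, ((1 / (D : ℝ)) * a n) * (Real.log ((1 / (D : ℝ)) * a n) - 1))
        = ∑ d, ∑ n, (P d n * Real.log (P d n)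
            - P d n * Real.log ((1 / (D : ℝ)) * a n) - P d n + (1 / (D : ℝ)) * a n) := by
      have e1 : ∀ (Q : Matrix (Fin D) (Fin N) ℝ),
          (∑ d, ∑ n, Q d n * (Real.log (Q d n) - 1))
            = (∑ d, ∑ n, Q d n * Real.log (Q d n)) - ∑ d, ∑ n, Q d n := by
        intro Q
        simp_rw [mul_sub, mul_one, Finset.sum_sub_distrib]
      have e2 : (∑ d, ∑ n, (P d n * Real.log (P d n)
            - P d n * Real.log ((1 / (D : ℝ)) * a n) - P d n + (1 / (D : ℝ)) * a n))
          = (∑ d, ∑ n, P d n * Real.log (P d n))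
            - (∑ d, ∑ n, P d n * Real.log ((1 / (D : ℝ)) * a n))
            - (∑ d, ∑ n, P d n)
            + (∑ _d : Fin D, ∑ n : Fin N, (1 / (D : ℝ)) * a n) := by
        simp_rw [Finset.sum_add_distrib, Finset.sum_sub_distrib]
      rw [e1 P, e1 (fun d n => (1 / (D : ℝ)) * a n), e2,
        cross P hPcol, tot P hPcol]
      have c2 := cross (fun d n => (1 / (D : ℝ)) * a n) hPstarcol
      have t2 := tot (fun d n => (1 / (D : ℝ)) * a n) hPstarcol
      rw [c2, t2]
      ring
    have term_nonneg : ∀ d n, 0 ≤ P d n * Real.log (P d n)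
        - P d n * Real.log ((1 / (D : ℝ)) * a n) - P d n + (1 / (D : ℝ)) * a n :=
      fun d n => (gibbs_aux (P d n) ((1 / (D : ℝ)) * a n) (hP0 d n) (hQpos n)).1
    have sum_nonneg : 0 ≤ ∑ d, ∑ n, (P d n * Real.log (P d n)
        - P d n * Real.log ((1 / (D : ℝ)) * a n) - P d n + (1 / (D : ℝ)) * a n) :=
      Finset.sum_nonneg fun d _ => Finset.sum_nonneg fun n _ => term_nonneg d n
    constructor
    · linarith [key, sum_nonneg]
    · intro heq
      have hzero : ∑ d, ∑ n, (P d n * Real.log (P d n)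
          - P d n * Real.log ((1 / (D : ℝ)) * a n) - P d n + (1 / (D : ℝ)) * a n) = 0 := by
        linarith [key]
      funext d n
      have h1 : ∀ d ∈ Finset.univ, (0:ℝ) ≤ ∑ n, (P d n * Real.log (P d n)
          - P d n * Real.log ((1 / (D : ℝ)) * a n) - P d n + (1 / (D : ℝ)) * a n) :=
        fun d _ => Finset.sum_nonneg fun n _ => term_nonneg d n
      have h2 := (Finset.sum_eq_zero_iff_of_nonneg h1).mp hzero d (Finset.mem_univ d)
      have h3 := (Finset.sum_eq_zero_iff_of_nonneg
        (fun n _ => term_nonneg d n)).mp h2 n (Finset.mem_univ n)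
      exact (gibbs_aux (P d n) ((1 / (D : ℝ)) * a n) (hP0 d n) (hQpos n)).2 h3
  · intro d
    have hsum : (∑ m : Fin N, (1 / (D : ℝ)) * a m) = 1 / (D : ℝ) := by
      rw [← Finset.mul_sum, has, mul_one]
    simp only [hsum]
    refine Finset.sum_congr rfl fun n _ => ?_
    congr 1
    field_simp
end
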